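/- Let A be a q×s bisequence matrix with column leaf sequence y = (y_1,…,y_q) and row leaf sequence v = (v_1,…,v_s), let B be a t×p bisequence matrix with column leaf sequence u = (u_1,…,u_t) and row leaf sequence x = (x_1,…,x_p), and let C be a t′×p′ bisequence matrix with column leaf sequence w and row leaf sequence z. If (A,B) is a block transverse pair, define the product shape A·B to be the t×s bisequence matrix shape whose row leaf sequence is (X_1,…,X_s), where X_l is the sum of the x_j over the l-th consecutive group of v_l columns of B, and whose column leaf sequence is (Y_1,…,Y_t), where Y_i is the sum of the y over the i-th consecutive group of u_i rows of A; define B·C analogously when (B,C) is a block transverse pair. Then: (1) if (A,B) is a block transverse pair, then (A·B, C) is a block transverse pair if and only if (B, C) is; and (2) if (B,C) is a block transverse pair, then (A, B·C) is a block transverse pair if and only if (A, B) is. -/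

import Mathlib

/-- A `q × p` bidegree matrix: every entry `(out, in)` consists of positive integers. -/
def IsBidegMatrix {q p : ℕ} (E : Fin q → Fin p → ℕ × ℕ) : Prop :=
  ∀ i j, 1 ≤ (E i j).1 ∧ 1 ≤ (E i j).2

/-- `(A, B)` is a block transverse pair (BTP): there is a partition of the rows of the
`q × s` matrix `A` into `t` consecutive nonempty groups (the fibers of a monotone
surjection `rowGrp : Fin q → Fin t`) and of the columns of the `t × p` matrix `B` into
`s` consecutive nonempty groups (the fibers of a monotone surjection
`colGrp : Fin p → Fin s`) such that for all `i, l` the `l`-th column of `A` restricted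
to the `i`-th row group and the `i`-th row of `B` restricted to the `l`-th column
group form a transverse pair. -/
def IsBTP {q s t p : ℕ} (A : Fin q → Fin s → ℕ × ℕ) (B : Fin t → Fin p → ℕ × ℕ) :
    Prop :=
  ∃ (rowGrp : Fin q → Fin t) (colGrp : Fin p → Fin s),
    Monotone rowGrp ∧ Function.Surjective rowGrp ∧
    Monotone colGrp ∧ Function.Surjective colGrp ∧
    (∀ (i : Fin t) (l : Fin s) (r : Fin q) (c : Fin p),
      rowGrp r = i → colGrp c = l →
      (A r l).2 = (Finset.univ.filter fun c' => colGrp c' = l).card ∧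
      (B i c).1 = (Finset.univ.filter fun r' => rowGrp r' = i).card)

/-- Given block sizes `v : Fin s → ℕ` and a sequence `x : Fin p → ℕ`, `groupSum v x l`
is the sum of the `x_j` over the `l`-th consecutive group of `v_l` indices, i.e. over
those `j` with `v_1 + ⋯ + v_{l-1} ≤ j < v_1 + ⋯ + v_l` (0-indexed). -/
def groupSum {s p : ℕ} (v : Fin s → ℕ) (x : Fin p → ℕ) (l : Fin s) : ℕ :=
  ∑ j ∈ Finset.univ.filter (fun j : Fin p =>
      (∑ l' ∈ Finset.univ.filter (fun l' => l' < l), v l') ≤ (j : ℕ) ∧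
      (j : ℕ) < (∑ l' ∈ Finset.univ.filter (fun l' => l' < l), v l') + v l),
    x j

/-- Let `A` (`q × s`, cls `y`, rls `v`), `B` (`t × p`, cls `u`, rls `x`), and `C`
(`t′ × p′`, cls `w`, rls `z`) be bisequence matrices.  If `(A,B)` is a BTP, the
product shape `A·B` is the `t × s` bisequence matrix whose row leaf sequence is
`(X_1,…,X_s)` with `X_l` the sum of the `x_j` over the `l`-th consecutive group of
`v_l` columns of `B`, and whose column leaf sequence is `(Y_1,…,Y_t)` with `Y_i` the
sum of the `y` over the `i`-th consecutive group of `u_i` rows of `A`; `B·C` is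
defined analogously.  Then: (1) if `(A,B)` is a BTP, then `(A·B, C)` is a BTP iff
`(B, C)` is; and (2) if `(B,C)` is a BTP, then `(A, B·C)` is a BTP iff `(A, B)` is. -/

def ofs {n : ℕ} (a : Fin n → ℕ) (l : Fin n) : ℕ :=
  ∑ l' ∈ Finset.univ.filter (fun l' => l' < l), a l'

lemma groupSum_eq {s p : ℕ} (v : Fin s → ℕ) (x : Fin p → ℕ) (l : Fin s) :
    groupSum v x l = ∑ j ∈ Finset.univ.filter
      (fun j : Fin p => ofs v l ≤ (j : ℕ) ∧ (j : ℕ) < ofs v l + v l), x j := rfl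

lemma ofs_add_le {n : ℕ} (a : Fin n → ℕ) (l : Fin n) : ofs a l + a l ≤ ∑ l', a l' := by
  have hl : l ∉ Finset.univ.filter (fun l' => l' < l) := by simp
  calc ofs a l + a l = ∑ l' ∈ insert l (Finset.univ.filter (fun l' => l' < l)), a l' := by
        rw [Finset.sum_insert hl, ofs, add_comm]
    _ ≤ ∑ l', a l' := Finset.sum_le_sum_of_subset (Finset.subset_univ _)

lemma ofs_strict {n : ℕ} (a : Fin n → ℕ) {l l' : Fin n} (h : l < l') :
    ofs a l + a l ≤ ofs a l' := by
  have hl : l ∉ Finset.univ.filter (fun l'' => l'' < l) := by simp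
  have hsub : insert l (Finset.univ.filter (fun l'' => l'' < l)) ⊆
      Finset.univ.filter (fun l'' => l'' < l') := by
    intro m hm
    simp only [Finset.mem_insert, Finset.mem_filter, Finset.mem_univ, true_and] at *
    rcases hm with rfl | hm
    · exact h
    · exact lt_trans hm h
  calc ofs a l + a l = ∑ l'' ∈ insert l (Finset.univ.filter (fun l'' => l'' < l)), a l'' := by
        rw [Finset.sum_insert hl, ofs, add_comm]
    _ ≤ ofs a l' := Finset.sum_le_sum_of_subset hsub

lemma block_disjoint {n : ℕ} (a : Fin n → ℕ) {l l' : Fin n} {j : ℕ}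
    (h1 : ofs a l ≤ j) (h2 : j < ofs a l + a l)
    (h3 : ofs a l' ≤ j) (h4 : j < ofs a l' + a l') : l = l' := by
  rcases lt_trichotomy l l' with h | h | h
  · have := ofs_strict a h; omega
  · exact h
  · have := ofs_strict a h; omega

lemma ofs_succ {n : ℕ} (a : Fin n → ℕ) (k : Fin n) (hk : 0 < (k : ℕ)) :
    ofs a k = ofs a ⟨(k : ℕ) - 1, by omega⟩ + a ⟨(k : ℕ) - 1, by omega⟩ := by
  have h : Finset.univ.filter (fun l' => l' < k) =
      insert (⟨(k : ℕ) - 1, by omega⟩ : Fin n)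
        (Finset.univ.filter (fun l' => l' < (⟨(k : ℕ) - 1, by omega⟩ : Fin n))) := by
    ext m
    simp only [Finset.mem_filter, Finset.mem_univ, true_and, Finset.mem_insert,
      Fin.lt_def, Fin.ext_iff]
    omega
  rw [ofs, h, Finset.sum_insert (by simp), ofs]; ring

lemma ofs_last {n : ℕ} (a : Fin n → ℕ) (hn : 0 < n) :
    ofs a ⟨n - 1, by omega⟩ + a ⟨n - 1, by omega⟩ = ∑ l, a l := by
  have h : (Finset.univ : Finset (Fin n)) =
      insert (⟨n - 1, by omega⟩ : Fin n)
        (Finset.univ.filter (fun l' => l' < (⟨n - 1, by omega⟩ : Fin n))) := by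
    ext m
    simp only [Finset.mem_filter, Finset.mem_univ, true_and, Finset.mem_insert,
      Fin.lt_def, Fin.ext_iff, Fin.val_mk, true_iff]
    have := m.isLt
    omega
  rw [eq_comm, h, Finset.sum_insert (by simp), ofs]; ring

lemma card_interval {m : ℕ} (c d : ℕ) (h : c + d ≤ m) :
    (Finset.univ.filter fun j : Fin m => c ≤ (j : ℕ) ∧ (j : ℕ) < c + d).card = d := by
  have : (Finset.univ.filter fun j : Fin m => c ≤ (j : ℕ) ∧ (j : ℕ) < c + d).card
      = (Finset.Ico c (c + d)).card := by
    refine Finset.card_bij (fun j _ => (j : ℕ)) ?_ ?_ ?_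
    · intro j hj
      simp only [Finset.mem_filter] at hj
      simp [Finset.mem_Ico, hj.2.1, hj.2.2]
    · intro j1 h1 j2 h2 he
      exact Fin.ext he
    · intro k hk
      simp only [Finset.mem_Ico] at hk
      exact ⟨⟨k, by omega⟩, by simp [hk.1, hk.2], rfl⟩
  rw [this, Nat.card_Ico]; omega

lemma exists_mono_surj {m n : ℕ} (hm : 1 ≤ m) (a : Fin n → ℕ) (ha : ∀ l, 1 ≤ a l)
    (hsum : ∑ l, a l = m) :
    ∃ f : Fin m → Fin n, Monotone f ∧ Function.Surjective f ∧
      ∀ l, Finset.univ.filter (fun j => f j = l) =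
        Finset.univ.filter
          (fun j : Fin m => ofs a l ≤ (j : ℕ) ∧ (j : ℕ) < ofs a l + a l) := by
  have hn : 0 < n := by
    rcases Nat.eq_zero_or_pos n with h | h
    · subst h; simp at hsum; omega
    · exact h
  have hSne : ∀ j : Fin m,
      (Finset.univ.filter fun l : Fin n => (j : ℕ) < ofs a l + a l).Nonempty := by
    intro j
    refine ⟨⟨n - 1, by omega⟩, ?_⟩
    simp only [Finset.mem_filter, Finset.mem_univ, true_and]
    rw [ofs_last a hn, hsum]
    exact j.isLt
  set f : Fin m → Fin n :=
    fun j => (Finset.univ.filter fun l : Fin n => (j : ℕ) < ofs a l + a l).min' (hSne j)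
    with hf
  have hfmem : ∀ j : Fin m, (j : ℕ) < ofs a (f j) + a (f j) := by
    intro j
    have := Finset.min'_mem _ (hSne j)
    simpa using this
  have hfle : ∀ j : Fin m, ofs a (f j) ≤ (j : ℕ) := by
    intro j
    by_contra hlt
    push_neg at hlt
    have hk0 : 0 < ((f j) : ℕ) := by
      by_contra h0
      push_neg at h0
      have hfe : Finset.univ.filter (fun l' => l' < f j) = (∅ : Finset (Fin n)) := by
        ext m'
        simp only [Finset.mem_filter, Finset.mem_univ, true_and, Finset.notMem_empty,
          iff_false, Fin.lt_def]
        omega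
      have : ofs a (f j) = 0 := by rw [ofs, hfe, Finset.sum_empty]
      omega
    have hsucc := ofs_succ a (f j) hk0
    set k' : Fin n := ⟨((f j) : ℕ) - 1, by omega⟩
    have hk'mem : k' ∈ Finset.univ.filter fun l : Fin n => (j : ℕ) < ofs a l + a l := by
      simp only [Finset.mem_filter, Finset.mem_univ, true_and]
      omega
    have hmle : f j ≤ k' := Finset.min'_le _ _ hk'mem
    have hk'lt : k' < f j := by
      simp only [Fin.lt_def]
      show (f j : ℕ) - 1 < (f j : ℕ)
      omega
    exact absurd hmle (not_le.mpr hk'lt)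
  have hmono : Monotone f := by
    intro j j' hjj
    apply Finset.min'_le
    simp only [Finset.mem_filter, Finset.mem_univ, true_and]
    have := hfmem j'
    have : (j : ℕ) ≤ (j' : ℕ) := hjj
    have := hfmem j'
    omega
  have hblock : ∀ (j : Fin m) (l : Fin n),
      f j = l ↔ (ofs a l ≤ (j : ℕ) ∧ (j : ℕ) < ofs a l + a l) := by
    intro j l
    constructor
    · rintro rfl
      exact ⟨hfle j, hfmem j⟩
    · rintro ⟨h1, h2⟩
      exact block_disjoint a (hfle j) (hfmem j) h1 h2
  have hsurj : Function.Surjective f := by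
    intro l
    have h1 : ofs a l + a l ≤ m := hsum ▸ ofs_add_le a l
    have h2 : 1 ≤ a l := ha l
    refine ⟨⟨ofs a l, by omega⟩, ?_⟩
    rw [hblock]
    constructor <;> simp <;> omega
  refine ⟨f, hmono, hsurj, ?_⟩
  intro l
  ext j
  simp only [Finset.mem_filter, Finset.mem_univ, true_and]
  exact hblock j l

lemma fiber_card {m n : ℕ} {f : Fin m → Fin n} {a : Fin n → ℕ}
    (hfib : ∀ l, Finset.univ.filter (fun j => f j = l) =
      Finset.univ.filter
        (fun j : Fin m => ofs a l ≤ (j : ℕ) ∧ (j : ℕ) < ofs a l + a l))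
    (hsum : ∑ l, a l = m) (l : Fin n) :
    (Finset.univ.filter (fun j => f j = l)).card = a l := by
  rw [hfib l]
  exact card_interval _ _ (hsum ▸ ofs_add_le a l)

lemma sum_groupSum {s p : ℕ} (hp : 1 ≤ p) (v : Fin s → ℕ) (hv : ∀ l, 1 ≤ v l)
    (hsum : ∑ l, v l = p) (x : Fin p → ℕ) :
    ∑ l, groupSum v x l = ∑ j, x j := by
  obtain ⟨f, _, _, hfib⟩ := exists_mono_surj hp v hv hsum
  calc ∑ l, groupSum v x l
      = ∑ l, ∑ j ∈ Finset.univ.filter (fun j => f j = l), x j := by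
        refine Finset.sum_congr rfl fun l _ => ?_
        rw [groupSum_eq, hfib l]
    _ = ∑ j, x j := Finset.sum_fiberwise _ _ _

lemma groupSum_pos {s p : ℕ} (v : Fin s → ℕ) (x : Fin p → ℕ) (l : Fin s)
    (hvl : 1 ≤ v l) (hx : ∀ j, 1 ≤ x j) (hle : ofs v l + v l ≤ p) :
    1 ≤ groupSum v x l := by
  rw [groupSum_eq]
  have hj0 : (⟨ofs v l, by omega⟩ : Fin p) ∈ Finset.univ.filter
      (fun j : Fin p => ofs v l ≤ (j : ℕ) ∧ (j : ℕ) < ofs v l + v l) := by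
    simp only [Finset.mem_filter, Finset.mem_univ, true_and]
    constructor <;> simp <;> omega
  calc 1 ≤ x ⟨ofs v l, by omega⟩ := hx _
    _ ≤ _ := Finset.single_le_sum (fun i _ => Nat.zero_le _) hj0

lemma isBTP_iff {q s t p : ℕ} (hq : 1 ≤ q) (hs : 1 ≤ s) (ht : 1 ≤ t) (hp : 1 ≤ p)
    (A : Fin q → Fin s → ℕ × ℕ) (B : Fin t → Fin p → ℕ × ℕ)
    (u : Fin t → ℕ) (v : Fin s → ℕ)
    (hAv : ∀ i j, (A i j).2 = v j) (hBu : ∀ i j, (B i j).1 = u i)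
    (hu : ∀ i, 1 ≤ u i) (hv : ∀ l, 1 ≤ v l) :
    IsBTP A B ↔ ((∑ i, u i) = q ∧ (∑ l, v l) = p) := by
  constructor
  · rintro ⟨rg, cg, hmr, hsr, hmc, hsc, hcond⟩
    have hucard : ∀ i, u i = (Finset.univ.filter fun r' => rg r' = i).card := by
      intro i
      obtain ⟨r, hr⟩ := hsr i
      obtain ⟨c, hc⟩ := hsc ⟨0, hs⟩
      have h := (hcond i ⟨0, hs⟩ r c hr hc).2
      rwa [hBu] at h
    have hvcard : ∀ l, v l = (Finset.univ.filter fun c' => cg c' = l).card := by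
      intro l
      obtain ⟨r, hr⟩ := hsr ⟨0, ht⟩
      obtain ⟨c, hc⟩ := hsc l
      have h := (hcond ⟨0, ht⟩ l r c hr hc).1
      rwa [hAv] at h
    constructor
    · rw [Finset.sum_congr rfl (fun i _ => hucard i)]
      have h := Finset.card_eq_sum_card_fiberwise
        (f := rg) (s := Finset.univ) (t := Finset.univ) (fun r _ => Finset.mem_univ _)
      rw [Finset.card_univ, Fintype.card_fin] at h
      exact h.symm
    · rw [Finset.sum_congr rfl (fun l _ => hvcard l)]
      have h := Finset.card_eq_sum_card_fiberwise
        (f := cg) (s := Finset.univ) (t := Finset.univ) (fun c _ => Finset.mem_univ _)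
      rw [Finset.card_univ, Fintype.card_fin] at h
      exact h.symm
  · rintro ⟨hus, hvs⟩
    obtain ⟨rg, hmr, hsr, hrfib⟩ := exists_mono_surj hq u hu hus
    obtain ⟨cg, hmc, hsc, hcfib⟩ := exists_mono_surj hp v hv hvs
    refine ⟨rg, cg, hmr, hsr, hmc, hsc, ?_⟩
    intro i l r c hr hc
    constructor
    · rw [hAv, fiber_card hcfib hvs]
    · rw [hBu, fiber_card hrfib hus]

theorem btp_product_assoc {q s t p t' p' : ℕ}
    (hq : 1 ≤ q) (hs : 1 ≤ s) (ht : 1 ≤ t) (hp : 1 ≤ p) (ht' : 1 ≤ t') (hp' : 1 ≤ p')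
    (A : Fin q → Fin s → ℕ × ℕ) (B : Fin t → Fin p → ℕ × ℕ)
    (C : Fin t' → Fin p' → ℕ × ℕ)
    (hApos : IsBidegMatrix A) (hBpos : IsBidegMatrix B) (hCpos : IsBidegMatrix C)
    (y : Fin q → ℕ) (v : Fin s → ℕ) (u : Fin t → ℕ) (x : Fin p → ℕ)
    (w : Fin t' → ℕ) (z : Fin p' → ℕ)
    (hAy : ∀ i j, (A i j).1 = y i) (hAv : ∀ i j, (A i j).2 = v j)
    (hBu : ∀ i j, (B i j).1 = u i) (hBx : ∀ i j, (B i j).2 = x j)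
    (hCw : ∀ i j, (C i j).1 = w i) (hCz : ∀ i j, (C i j).2 = z j) :
    (IsBTP A B →
      (IsBTP (fun (i : Fin t) (l : Fin s) => (groupSum u y i, groupSum v x l)) C ↔
        IsBTP B C)) ∧
    (IsBTP B C →
      (IsBTP A (fun (i : Fin t') (j : Fin p) => (groupSum w u i, groupSum x z j)) ↔
        IsBTP A B)) := by
  have hu : ∀ i, 1 ≤ u i := fun i => by
    have h := (hBpos i ⟨0, hp⟩).1; rwa [hBu] at h
  have hv : ∀ l, 1 ≤ v l := fun l => by
    have h := (hApos ⟨0, hq⟩ l).2; rwa [hAv] at h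
  have hx : ∀ j, 1 ≤ x j := fun j => by
    have h := (hBpos ⟨0, ht⟩ j).2; rwa [hBx] at h
  have hw : ∀ i, 1 ≤ w i := fun i => by
    have h := (hCpos i ⟨0, hp'⟩).1; rwa [hCw] at h
  have hAB : IsBTP A B ↔ ((∑ i, u i) = q ∧ (∑ l, v l) = p) :=
    isBTP_iff hq hs ht hp A B u v hAv hBu hu hv
  have hBC : IsBTP B C ↔ ((∑ i, w i) = t ∧ (∑ j, x j) = p') :=
    isBTP_iff ht hp ht' hp' B C w x hBx hCw hw hx
  constructor
  · intro hab
    obtain ⟨hus, hvs⟩ := hAB.mp hab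
    have hXpos : ∀ l, 1 ≤ groupSum v x l := fun l =>
      groupSum_pos v x l (hv l) hx (hvs ▸ ofs_add_le v l)
    have hDC : IsBTP (fun (i : Fin t) (l : Fin s) => (groupSum u y i, groupSum v x l)) C
        ↔ ((∑ i, w i) = t ∧ (∑ l, groupSum v x l) = p') :=
      isBTP_iff ht hs ht' hp' _ C w (fun l => groupSum v x l)
        (fun _ _ => rfl) hCw hw hXpos
    rw [hDC, hBC, sum_groupSum hp v hv hvs x]
  · intro hbc
    obtain ⟨hws, hxs⟩ := hBC.mp hbc
    have hYpos : ∀ i, 1 ≤ groupSum w u i := fun i =>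
      groupSum_pos w u i (hw i) hu (hws ▸ ofs_add_le w i)
    have hAE : IsBTP A (fun (i : Fin t') (j : Fin p) => (groupSum w u i, groupSum x z j))
        ↔ ((∑ i, groupSum w u i) = q ∧ (∑ l, v l) = p) :=
      isBTP_iff hq hs ht' hp A _ (fun i => groupSum w u i) v
        hAv (fun _ _ => rfl) hYpos hv
    rw [hAE, hAB, sum_groupSum ht w hw hws u]
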